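/- Every infinite messy ladder either has an infinite maximal sequence of pairwise independent full crosses, or contains an infinite cross-free ladder as an induced subgraph. -/

import Mathlib

variable {V : Type*}

/-- An infinite messy ladder structure on the graph `L`: all vertices lie on two
disjoint induced rays `w` and `x` (the rails) lying in the same end of `L`, `L` is
locally finite, and there is an edge between the initial vertices of the rails. -/
structure MessyLadder (L : SimpleGraph V) where
  w : ℕ → V
  x : ℕ → V
  w_inj : Function.Injective w
  x_inj : Function.Injective x
  disj : ∀ i j, w i ≠ x j
  w_induced : ∀ i j, L.Adj (w i) (w j) ↔ (i = j + 1 ∨ j = i + 1)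
  x_induced : ∀ i j, L.Adj (x i) (x j) ↔ (i = j + 1 ∨ j = i + 1)
  cover : ∀ v : V, (∃ i, v = w i) ∨ (∃ i, v = x i)
  locFin : ∀ v : V, (L.neighborSet v).Finite
  init : L.Adj (w 0) (x 0)
  sameEnd : ∃ (a b : ℕ → ℕ) (P : ∀ n, L.Walk (w (a n)) (x (b n))),
    (∀ n, (P n).IsPath) ∧
    ∀ m n, m ≠ n → ∀ v, v ∈ (P m).support → v ∈ (P n).support → False

/-- The rung joining `w i` and `x j` is present. -/
def MessyLadder.Rung {L : SimpleGraph V} (M : MessyLadder L) (i j : ℕ) : Prop :=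
  L.Adj (M.w i) (M.x j)

/-- The rungs `e = (i₁, j₁)` and `f = (i₂, j₂)` form a cross `(e, f)`:
`e_W < f_W` and `f_X < e_X`.  Its `W`-span is `W[i₁, i₂]` and its `X`-span is
`X[j₂, j₁]`. -/
def MessyLadder.Cross {L : SimpleGraph V} (M : MessyLadder L) (i1 j1 i2 j2 : ℕ) : Prop :=
  M.Rung i1 j1 ∧ M.Rung i2 j2 ∧ i1 < i2 ∧ j2 < j1

/-- The cross `(i₁,j₁,i₂,j₂)` is full: no other cross has a `W`-span containing
`W[i₁,i₂]` and an `X`-span containing `X[j₂,j₁]`. -/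
def MessyLadder.FullCross {L : SimpleGraph V} (M : MessyLadder L) (i1 j1 i2 j2 : ℕ) : Prop :=
  M.Cross i1 j1 i2 j2 ∧
    ¬ ∃ a b c d, M.Cross a b c d ∧ ¬ (a = i1 ∧ b = j1 ∧ c = i2 ∧ d = j2) ∧
      a ≤ i1 ∧ i2 ≤ c ∧ d ≤ j2 ∧ j1 ≤ b

/-- Two crosses are independent: their `W`-spans are edge-disjoint and their
`X`-spans are edge-disjoint. -/
def IndepCrosses (i1 j1 i2 j2 a1 b1 a2 b2 : ℕ) : Prop :=
  (i2 ≤ a1 ∨ a2 ≤ i1) ∧ (b1 ≤ j2 ∨ j1 ≤ b2)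

/-- The four sequences encode an infinite sequence of pairwise independent full
crosses of the ladder `M`. -/
def GoodCrossSeq {L : SimpleGraph V} (M : MessyLadder L) (I1 J1 I2 J2 : ℕ → ℕ) : Prop :=
  (∀ n, M.FullCross (I1 n) (J1 n) (I2 n) (J2 n)) ∧
  ∀ m n, m ≠ n → IndepCrosses (I1 m) (J1 m) (I2 m) (J2 m) (I1 n) (J1 n) (I2 n) (J2 n)

/-- The infinite sequence of pairwise independent full crosses is maximal: it is
not a proper subsequence of another such sequence, i.e. any such sequence of which
it is a subsequence consists of exactly the same crosses. -/
def MaximalCrossSeq {L : SimpleGraph V} (M : MessyLadder L) (I1 J1 I2 J2 : ℕ → ℕ) : Prop :=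
  GoodCrossSeq M I1 J1 I2 J2 ∧
  ∀ K1 L1 K2 L2 : ℕ → ℕ, GoodCrossSeq M K1 L1 K2 L2 →
    (∃ φ : ℕ → ℕ, StrictMono φ ∧ ∀ n,
        I1 n = K1 (φ n) ∧ J1 n = L1 (φ n) ∧ I2 n = K2 (φ n) ∧ J2 n = L2 (φ n)) →
    ∀ m, ∃ n, K1 m = I1 n ∧ L1 m = J1 n ∧ K2 m = I2 n ∧ L2 m = J2 n
namespace MLAux

variable {V : Type*} {L : SimpleGraph V}

/-- Crosses and independence, as predicates on 4-tuples. -/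
abbrev Tup := ℕ × ℕ × ℕ × ℕ

def IsC (M : MessyLadder L) (t : Tup) : Prop := M.Cross t.1 t.2.1 t.2.2.1 t.2.2.2
def IsF (M : MessyLadder L) (t : Tup) : Prop := M.FullCross t.1 t.2.1 t.2.2.1 t.2.2.2
def Ind (t u : Tup) : Prop :=
  IndepCrosses t.1 t.2.1 t.2.2.1 t.2.2.2 u.1 u.2.1 u.2.2.1 u.2.2.2

lemma ind_symm {t u : Tup} (h : Ind t u) : Ind u t := by
  unfold Ind IndepCrosses at *; tauto

lemma rungs_w_finite (M : MessyLadder L) (B : ℕ) :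
    {p : ℕ × ℕ | M.Rung p.1 p.2 ∧ p.1 < B}.Finite := by
  have h1 : ∀ a : ℕ, {b | M.Rung a b}.Finite := by
    intro a
    have : {b | M.Rung a b} = M.x ⁻¹' (L.neighborSet (M.w a)) := rfl
    rw [this]
    exact (M.locFin (M.w a)).preimage M.x_inj.injOn
  have hsub : {p : ℕ × ℕ | M.Rung p.1 p.2 ∧ p.1 < B} ⊆
      ⋃ a ∈ Finset.range B, (fun b => (a, b)) '' {b | M.Rung a b} := by
    rintro ⟨a, b⟩ ⟨hr, hab⟩
    exact Set.mem_biUnion (Finset.mem_coe.mpr (Finset.mem_range.mpr hab)) ⟨b, hr, rfl⟩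
  exact (Set.Finite.biUnion (Finset.range B).finite_toSet
    (fun a _ => (h1 a).image _)).subset hsub

lemma rungs_x_finite (M : MessyLadder L) (B : ℕ) :
    {p : ℕ × ℕ | M.Rung p.1 p.2 ∧ p.2 < B}.Finite := by
  have h1 : ∀ b : ℕ, {a | M.Rung a b}.Finite := by
    intro b
    have : {a | M.Rung a b} = M.w ⁻¹' (L.neighborSet (M.x b)) := by
      ext a
      simp only [Set.mem_setOf_eq, Set.mem_preimage, SimpleGraph.mem_neighborSet]
      exact ⟨fun h => h.symm, fun h => h.symm⟩
    rw [this]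
    exact (M.locFin (M.x b)).preimage M.w_inj.injOn
  have hsub : {p : ℕ × ℕ | M.Rung p.1 p.2 ∧ p.2 < B} ⊆
      ⋃ b ∈ Finset.range B, (fun a => (a, b)) '' {a | M.Rung a b} := by
    rintro ⟨a, b⟩ ⟨hr, hab⟩
    exact Set.mem_biUnion (Finset.mem_coe.mpr (Finset.mem_range.mpr hab)) ⟨a, hr, rfl⟩
  exact (Set.Finite.biUnion (Finset.range B).finite_toSet
    (fun b _ => (h1 b).image _)).subset hsub

/-- Every cross is contained in a full cross. -/
lemma fullize (M : MessyLadder L) {i1 j1 i2 j2 : ℕ} (h : M.Cross i1 j1 i2 j2) :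
    ∃ a b c d, M.FullCross a b c d ∧ a ≤ i1 ∧ j1 ≤ b ∧ i2 ≤ c ∧ d ≤ j2 := by
  set T : Set Tup := {t | M.Cross t.1 t.2.1 t.2.2.1 t.2.2.2 ∧
    t.1 ≤ i1 ∧ j1 ≤ t.2.1 ∧ i2 ≤ t.2.2.1 ∧ t.2.2.2 ≤ j2} with hT
  have hTfin : T.Finite := by
    have hR1 := rungs_w_finite M (i1 + 1)
    have hR2 := rungs_x_finite M (j2 + 1)
    have hsub : T ⊆ (fun pq : (ℕ × ℕ) × (ℕ × ℕ) => (pq.1.1, pq.1.2, pq.2.1, pq.2.2)) ''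
        ({p : ℕ × ℕ | M.Rung p.1 p.2 ∧ p.1 < i1 + 1} ×ˢ
         {p : ℕ × ℕ | M.Rung p.1 p.2 ∧ p.2 < j2 + 1}) := by
      rintro ⟨a, b, c, d⟩ ⟨⟨hr1, hr2, _, _⟩, ha, hb, hc, hd⟩
      exact ⟨((a, b), (c, d)), ⟨⟨hr1, Nat.lt_succ_of_le ha⟩, ⟨hr2, Nat.lt_succ_of_le hd⟩⟩, rfl⟩
    exact ((hR1.prod hR2).image _).subset hsub
  have hTne : T.Nonempty := ⟨(i1, j1, i2, j2), h, le_refl _, le_refl _, le_refl _, le_refl _⟩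
  obtain ⟨⟨a0, b0, c0, d0⟩, htT, hmax⟩ := Set.Finite.exists_maximalFor
    (fun t : Tup => t.2.1 + t.2.2.1 + (i1 - t.1) + (j2 - t.2.2.2)) T hTfin hTne
  have hcr0 : M.Cross a0 b0 c0 d0 := htT.1
  have ha0 : a0 ≤ i1 := htT.2.1
  have hb0 : j1 ≤ b0 := htT.2.2.1
  have hc0 : i2 ≤ c0 := htT.2.2.2.1
  have hd0 : d0 ≤ j2 := htT.2.2.2.2
  refine ⟨a0, b0, c0, d0, ⟨hcr0, ?_⟩, ha0, hb0, hc0, hd0⟩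
  rintro ⟨a, b, c, d, hcr, hne, hle1, hle2, hle3, hle4⟩
  have hmemT : (a, b, c, d) ∈ T :=
    ⟨hcr, hle1.trans ha0, hb0.trans hle4, hc0.trans hle2, hle3.trans hd0⟩
  have hle : b0 + c0 + (i1 - a0) + (j2 - d0) ≤ b + c + (i1 - a) + (j2 - d) := by omega
  have heq : b0 + c0 + (i1 - a0) + (j2 - d0) = b + c + (i1 - a) + (j2 - d) :=
    le_antisymm hle (hmax hmemT hle)
  exact hne (by omega)

/-- If crosses occur arbitrarily far out, so do full crosses. -/
lemma full_far (M : MessyLadder L)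
    (H : ∀ N, ∃ i1 j1 i2 j2, M.Cross i1 j1 i2 j2 ∧ N ≤ i1 ∧ N ≤ j2) (B : ℕ) :
    ∃ i1 j1 i2 j2, M.FullCross i1 j1 i2 j2 ∧ B ≤ i1 ∧ B ≤ j2 := by
  by_contra hcon
  push_neg at hcon
  -- All full crosses have i1 < B or j2 < B; deduce there are only finitely many.
  have hcon' : ∀ a b c d, M.FullCross a b c d → a < B ∨ d < B := by
    intro a b c d hf
    rcases Nat.lt_or_ge a B with h | h
    · exact Or.inl h
    · exact Or.inr (hcon a b c d hf h)
  set FS : Set Tup := {t | M.FullCross t.1 t.2.1 t.2.2.1 t.2.2.2} with hFSdef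
  have hR2 : ∃ B2, ∀ p : ℕ × ℕ, M.Rung p.1 p.2 → p.1 < B → p.2 < B2 := by
    obtain ⟨u, hu⟩ := ((rungs_w_finite M B).image Prod.snd).bddAbove
    refine ⟨u + 1, fun p h1 h2 => Nat.lt_succ_of_le (hu ⟨p, ⟨h1, h2⟩, rfl⟩)⟩
  have hR1 : ∃ B1, ∀ p : ℕ × ℕ, M.Rung p.1 p.2 → p.2 < B → p.1 < B1 := by
    obtain ⟨u, hu⟩ := ((rungs_x_finite M B).image Prod.fst).bddAbove
    refine ⟨u + 1, fun p h1 h2 => Nat.lt_succ_of_le (hu ⟨p, ⟨h1, h2⟩, rfl⟩)⟩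
  obtain ⟨B2, hB2⟩ := hR2
  obtain ⟨B1, hB1⟩ := hR1
  have hFS : FS.Finite := by
    have hsub : FS ⊆ (fun pq : (ℕ × ℕ) × (ℕ × ℕ) => (pq.1.1, pq.1.2, pq.2.1, pq.2.2)) ''
        ({p : ℕ × ℕ | M.Rung p.1 p.2 ∧ p.1 < B ⊔ B1} ×ˢ
         {p : ℕ × ℕ | M.Rung p.1 p.2 ∧ p.2 < B ⊔ B2}) := by
      rintro ⟨a, b, c, d⟩ hf
      have hf' : M.FullCross a b c d := hf
      obtain ⟨hr1, hr2, hac, hdb⟩ := hf'.1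
      rcases hcon' a b c d hf' with h | h
      · have hb : b < B2 := hB2 (a, b) hr1 h
        exact ⟨((a, b), (c, d)),
          ⟨⟨hr1, lt_of_lt_of_le h le_sup_left⟩,
           ⟨hr2, lt_of_lt_of_le (lt_trans hdb hb) le_sup_right⟩⟩, rfl⟩
      · have hc : c < B1 := hB1 (c, d) hr2 h
        exact ⟨((a, b), (c, d)),
          ⟨⟨hr1, lt_of_lt_of_le (lt_trans hac hc) le_sup_right⟩,
           ⟨hr2, lt_of_lt_of_le h le_sup_left⟩⟩, rfl⟩
    exact (((rungs_w_finite M (B ⊔ B1)).prod (rungs_x_finite M (B ⊔ B2))).image _).subset hsub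
  obtain ⟨U, hU⟩ := (hFS.image (fun t : Tup => t.2.2.1)).bddAbove
  obtain ⟨i1, j1, i2, j2, hcr, hi1, hj2⟩ := H (U + 1)
  obtain ⟨a, b, c, d, hfull, -, -, hc, -⟩ := fullize M hcr
  have hmem : (a, b, c, d) ∈ FS := hfull
  have : c ≤ U := hU ⟨(a, b, c, d), hmem, rfl⟩
  have : i1 < i2 := hcr.2.2.1
  omega

/-- A strictly "escaping" sequence of full crosses, pairwise independent. -/
lemma exists_good_family (M : MessyLadder L)
    (H : ∀ N, ∃ i1 j1 i2 j2, M.Cross i1 j1 i2 j2 ∧ N ≤ i1 ∧ N ≤ j2) :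
    ∃ g : ℕ → Tup, Function.Injective g ∧ (∀ n, IsF M (g n)) ∧
      (∀ m n, m ≠ n → Ind (g m) (g n)) := by
  have pick : ∀ B, ∃ t : Tup, IsF M t ∧ B ≤ t.1 ∧ B ≤ t.2.2.2 := by
    intro B
    obtain ⟨a, b, c, d, h1, h2, h3⟩ := full_far M H B
    exact ⟨(a, b, c, d), h1, h2, h3⟩
  choose f hf1 hf2 hf3 using pick
  set g : ℕ → Tup := fun n => Nat.rec (f 0) (fun _ p => f (p.2.1 ⊔ p.2.2.1 + 1)) n with hg
  have hstep : ∀ n, g (n + 1) = f ((g n).2.1 ⊔ (g n).2.2.1 + 1) := fun n => rfl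
  have hgF : ∀ n, IsF M (g n) := by
    intro n
    cases n with
    | zero => exact hf1 0
    | succ k => exact hf1 _
  have hcross : ∀ n, (g n).1 < (g n).2.2.1 ∧ (g n).2.2.2 < (g n).2.1 := by
    intro n
    obtain ⟨-, -, h1, h2⟩ := (hgF n).1
    exact ⟨h1, h2⟩
  have hstep' : ∀ n, (g n).2.1 ⊔ (g n).2.2.1 < (g (n + 1)).1 ∧
      (g n).2.1 ⊔ (g n).2.2.1 < (g (n + 1)).2.2.2 := by
    intro n
    constructor
    · exact Nat.lt_of_succ_le (by rw [hstep]; exact hf2 _)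
    · exact Nat.lt_of_succ_le (by rw [hstep]; exact hf3 _)
  have hmx : StrictMono (fun n => (g n).2.1 ⊔ (g n).2.2.1) := by
    apply strictMono_nat_of_lt_succ
    intro n
    have h1 := (hstep' n).2
    have h2 := (hcross (n + 1)).2
    exact lt_of_lt_of_le (lt_trans h1 h2) le_sup_left
  have key : ∀ m n, m < n → (g m).2.1 ⊔ (g m).2.2.1 < (g n).1 ∧
      (g m).2.1 ⊔ (g m).2.2.1 < (g n).2.2.2 := by
    intro m n hmn
    obtain ⟨k, rfl⟩ : ∃ k, n = k + 1 := ⟨n - 1, by omega⟩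
    have hmk : (g m).2.1 ⊔ (g m).2.2.1 ≤ (g k).2.1 ⊔ (g k).2.2.1 :=
      hmx.monotone (by omega)
    exact ⟨lt_of_le_of_lt hmk (hstep' k).1, lt_of_le_of_lt hmk (hstep' k).2⟩
  have hind : ∀ m n, m < n → Ind (g m) (g n) := by
    intro m n hmn
    obtain ⟨h1, h2⟩ := key m n hmn
    constructor
    · exact Or.inl (le_of_lt (lt_of_le_of_lt le_sup_right h1))
    · exact Or.inr (le_of_lt (lt_of_le_of_lt le_sup_left h2))
  refine ⟨g, ?_, hgF, ?_⟩
  · intro m n hmn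
    by_contra hne
    rcases Nat.lt_or_ge m n with h | h
    · have := (key m n h).1
      have h2 := (hcross m).1
      rw [hmn] at h2
      have : (g n).1 < (g n).2.2.1 := h2
      have h3 : (g n).2.2.1 ≤ (g m).2.1 ⊔ (g m).2.2.1 := by rw [hmn]; exact le_sup_right
      omega
    · rcases Nat.lt_or_ge n m with h' | h'
      · have := (key n m h').1
        have h2 := (hcross n).1
        rw [← hmn] at h2
        have h3 : (g m).2.2.1 ≤ (g n).2.1 ⊔ (g n).2.2.1 := by rw [← hmn]; exact le_sup_right
        omega
      · exact hne (by omega)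
  · intro m n hmn
    rcases Nat.lt_or_ge m n with h | h
    · exact hind m n h
    · exact ind_symm (hind n m (by omega))

/-- Left branch: a maximal good cross sequence exists. -/
lemma main_left (M : MessyLadder L)
    (H : ∀ N, ∃ i1 j1 i2 j2, M.Cross i1 j1 i2 j2 ∧ N ≤ i1 ∧ N ≤ j2) :
    ∃ I1 J1 I2 J2 : ℕ → ℕ, MaximalCrossSeq M I1 J1 I2 J2 := by
  classical
  obtain ⟨g, hginj, hgF, hgInd⟩ := exists_good_family M H
  set coll : Set (Set Tup) := {S | (∀ t ∈ S, IsF M t) ∧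
    ∀ t ∈ S, ∀ u ∈ S, t ≠ u → Ind t u} with hcoll
  have hrange : Set.range g ∈ coll := by
    constructor
    · rintro t ⟨n, rfl⟩; exact hgF n
    · rintro t ⟨m, rfl⟩ u ⟨n, rfl⟩ hne
      exact hgInd m n (fun h => hne (by rw [h]))
  have hzorn : ∀ c ⊆ coll, IsChain (fun x1 x2 => x1 ⊆ x2) c → c.Nonempty →
      ∃ ub ∈ coll, ∀ s ∈ c, s ⊆ ub := by
    intro c hc hchain hcne
    refine ⟨⋃₀ c, ⟨?_, ?_⟩, fun s hs => Set.subset_sUnion_of_mem hs⟩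
    · rintro t ⟨s, hs, hts⟩
      exact (hc hs).1 t hts
    · rintro t ⟨s, hs, hts⟩ u ⟨s', hs', hus'⟩ hne
      rcases eq_or_ne s s' with rfl | hss
      · exact (hc hs).2 t hts u hus' hne
      · rcases hchain hs hs' hss with hsub | hsub
        · exact (hc hs').2 t (hsub hts) u hus' hne
        · exact (hc hs).2 t hts u (hsub hus') hne
  obtain ⟨S, hsubS, hSmax⟩ := zorn_subset_nonempty coll hzorn (Set.range g) hrange
  have hSF : ∀ t ∈ S, IsF M t := hSmax.1.1
  have hSInd : ∀ t ∈ S, ∀ u ∈ S, t ≠ u → Ind t u := hSmax.1.2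
  have hSinf : S.Infinite := (Set.infinite_range_of_injective hginj).mono hsubS
  haveI : Infinite ↥S := hSinf.to_subtype
  obtain ⟨dS⟩ := nonempty_denumerable ↥S
  let e : ℕ ≃ ↥S := (@Denumerable.eqv ↥S dS).symm
  refine ⟨fun n => (↑(e n) : Tup).1, fun n => (↑(e n) : Tup).2.1,
    fun n => (↑(e n) : Tup).2.2.1, fun n => (↑(e n) : Tup).2.2.2, ⟨?good, ?_⟩⟩
  case good =>
    constructor
    · intro n; exact hSF ↑(e n) (e n).2
    · intro m n hmn
      have hne : (↑(e m) : Tup) ≠ ↑(e n) := by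
        intro h
        exact hmn (e.injective (Subtype.ext h))
      exact hSInd ↑(e m) (e m).2 ↑(e n) (e n).2 hne
  rintro K1 L1 K2 L2 hK ⟨φ, hφ, hφeq⟩ m
  by_cases hm : ∃ n, φ n = m
  · obtain ⟨n, rfl⟩ := hm
    exact ⟨n, (hφeq n).1.symm, (hφeq n).2.1.symm, (hφeq n).2.2.1.symm, (hφeq n).2.2.2.symm⟩
  · set t : Tup := (K1 m, L1 m, K2 m, L2 m) with ht
    have htF : IsF M t := hK.1 m
    have htInd : ∀ u ∈ S, Ind t u := by
      intro u hu
      obtain ⟨n, hn⟩ : ∃ n, (↑(e n) : Tup) = u := ⟨e.symm ⟨u, hu⟩, by simp⟩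
      have hmn : m ≠ φ n := fun h => hm ⟨n, h.symm⟩
      have hik := hK.2 m (φ n) hmn
      have hrw : (K1 (φ n), L1 (φ n), K2 (φ n), L2 (φ n)) = (↑(e n) : Tup) := by
        obtain ⟨h1, h2, h3, h4⟩ := hφeq n
        rw [← h1, ← h2, ← h3, ← h4]
      rw [← hn, ← hrw]
      exact hik
    have htS : t ∈ S := by
      by_contra hts
      have hins : insert t S ∈ coll := by
        constructor
        · rintro u (rfl | hu)
          · exact htF
          · exact hSF u hu
        · rintro u (rfl | hu) v (rfl | hv) hne
          · exact absurd rfl hne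
          · exact htInd v hv
          · exact ind_symm (htInd u hu)
          · exact hSInd u hu v hv hne
      have := hSmax.2 hins (Set.subset_insert t S)
      exact hts (this (Set.mem_insert t S))
    obtain ⟨n, hn⟩ : ∃ n, (↑(e n) : Tup) = t := ⟨e.symm ⟨t, htS⟩, by simp⟩
    exact ⟨n, (congrArg (fun p : Tup => p.1) hn).symm,
      (congrArg (fun p : Tup => p.2.1) hn).symm,
      (congrArg (fun p : Tup => p.2.2.1) hn).symm,
      (congrArg (fun p : Tup => p.2.2.2) hn).symm⟩

/-- Any walk from a `w`-vertex to an `x`-vertex contains a rung. -/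
lemma exists_cross_edge (M : MessyLadder L) :
    ∀ {u v : V} (p : L.Walk u v), (∃ i, u = M.w i) → (∃ j, v = M.x j) →
      ∃ k l, M.Rung k l ∧ M.w k ∈ p.support ∧ M.x l ∈ p.support := by
  intro u v p
  induction p with
  | nil =>
    rintro ⟨i, rfl⟩ ⟨j, hj⟩
    exact absurd hj (M.disj i j)
  | @cons u u' v h q ih =>
    rintro hu hv
    by_cases hb : ∃ i, u' = M.w i
    · obtain ⟨k, l, h1, h2, h3⟩ := ih hb hv
      exact ⟨k, l, h1, by simp [SimpleGraph.Walk.support_cons]; tauto,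
        by simp [SimpleGraph.Walk.support_cons]; tauto⟩
    · obtain ⟨i, rfl⟩ := hu
      obtain ⟨j, hj⟩ := (M.cover u').resolve_left hb
      subst hj
      refine ⟨i, j, h, ?_, ?_⟩
      · simp [SimpleGraph.Walk.support_cons]
      · rw [SimpleGraph.Walk.support_cons]
        exact List.mem_cons_of_mem _ q.start_mem_support

/-- There are rungs arbitrarily far out on both rails. -/
lemma exists_far_rung (M : MessyLadder L) (m : ℕ) :
    ∃ k l, M.Rung k l ∧ m ≤ k ∧ m ≤ l := by
  classical
  obtain ⟨a, b, P, hpath, hdisj⟩ := M.sameEnd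
  set Low : Set V := (M.w '' {i | i < m}) ∪ (M.x '' {i | i < m}) with hLowdef
  have hLow : Low.Finite :=
    ((Set.finite_Iio m).image _).union ((Set.finite_Iio m).image _)
  set Bad : Set ℕ := {n | ∃ v ∈ (P n).support, v ∈ Low} with hBaddef
  have hBad : Bad.Finite := by
    have hsub : Bad ⊆ ⋃ v ∈ Low, {n | v ∈ (P n).support} := by
      rintro n ⟨v, hv1, hv2⟩
      exact Set.mem_biUnion hv2 hv1
    refine (Set.Finite.biUnion hLow (fun v _ => ?_)).subset hsub
    apply Set.Subsingleton.finite
    intro n1 h1 n2 h2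
    by_contra hne
    exact hdisj n1 n2 hne v h1 h2
  obtain ⟨n, hn⟩ := hBad.infinite_compl.nonempty
  obtain ⟨k, l, hr, hks, hls⟩ := exists_cross_edge M (P n) ⟨a n, rfl⟩ ⟨b n, rfl⟩
  refine ⟨k, l, hr, ?_, ?_⟩
  · by_contra hk
    exact hn ⟨M.w k, hks, Or.inl ⟨k, (by omega : k < m), rfl⟩⟩
  · by_contra hl
    exact hn ⟨M.x l, hls, Or.inr ⟨l, (by omega : l < m), rfl⟩⟩

/-- A strictly increasing sequence of rungs inside the tails beyond `(k₀, l₀)`. -/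
lemma exists_rung_seq (M : MessyLadder L) (k₀ l₀ : ℕ) :
    ∃ c d : ℕ → ℕ, StrictMono c ∧ StrictMono d ∧
      ∀ n, M.Rung (k₀ + c n) (l₀ + d n) := by
  have pick : ∀ m, ∃ p : ℕ × ℕ, M.Rung (k₀ + p.1) (l₀ + p.2) ∧ m ≤ p.1 ∧ m ≤ p.2 := by
    intro m
    obtain ⟨k, l, hr, hk, hl⟩ := exists_far_rung M (k₀ + l₀ + m)
    refine ⟨(k - k₀, l - l₀), ?_, by omega, by omega⟩
    rw [show k₀ + (k - k₀) = k by omega, show l₀ + (l - l₀) = l by omega]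
    exact hr
  choose f hf1 hf2 hf3 using pick
  set ρ : ℕ → ℕ × ℕ := fun n => Nat.rec (f 0) (fun _ p => f (p.1 ⊔ p.2 + 1)) n with hρ
  have hstep : ∀ n, ρ (n + 1) = f ((ρ n).1 ⊔ (ρ n).2 + 1) := fun n => rfl
  refine ⟨fun n => (ρ n).1, fun n => (ρ n).2, ?_, ?_, ?_⟩
  · apply strictMono_nat_of_lt_succ
    intro n
    rw [hstep]
    exact lt_of_lt_of_le (Nat.lt_succ_of_le le_sup_left) (hf2 _)
  · apply strictMono_nat_of_lt_succ
    intro n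
    rw [hstep]
    exact lt_of_lt_of_le (Nat.lt_succ_of_le le_sup_right) (hf3 _)
  · intro n
    cases n with
    | zero => exact hf1 0
    | succ k => exact hf1 _

/-- Right branch: an induced cross-free messy ladder. -/
lemma main_right (M : MessyLadder L) (N : ℕ)
    (hN : ∀ i1 j1 i2 j2, M.Cross i1 j1 i2 j2 → i1 < N ∨ j2 < N) :
    ∃ s : Set V, ∃ M' : MessyLadder (L.induce s),
      ∀ i1 j1 i2 j2, ¬ M'.Cross i1 j1 i2 j2 := by
  classical
  obtain ⟨k₀, l₀, hr₀, hk₀, hl₀⟩ := exists_far_rung M N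
  set s : Set V := (M.w '' {i | k₀ ≤ i}) ∪ (M.x '' {j | l₀ ≤ j}) with hs
  have hws : ∀ i, M.w (k₀ + i) ∈ s := fun i => Or.inl ⟨k₀ + i, Nat.le_add_right _ _, rfl⟩
  have hxs : ∀ j, M.x (l₀ + j) ∈ s := fun j => Or.inr ⟨l₀ + j, Nat.le_add_right _ _, rfl⟩
  set w' : ℕ → ↥s := fun i => ⟨M.w (k₀ + i), hws i⟩ with hw'
  set x' : ℕ → ↥s := fun j => ⟨M.x (l₀ + j), hxs j⟩ with hx'
  have hadj : ∀ (u v : ↥s), (L.induce s).Adj u v ↔ L.Adj ↑u ↑v := fun u v => Iff.rfl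
  obtain ⟨c, d, hc, hd, hcd⟩ := exists_rung_seq M k₀ l₀
  refine ⟨s, ⟨w', x', ?_, ?_, ?_, ?_, ?_, ?_, ?_, ?_, ?_⟩, ?_⟩
  · -- w_inj
    intro i j h
    have := M.w_inj (congrArg Subtype.val h)
    omega
  · -- x_inj
    intro i j h
    have := M.x_inj (congrArg Subtype.val h)
    omega
  · -- disj
    intro i j h
    exact M.disj _ _ (congrArg Subtype.val h)
  · -- w_induced
    intro i j
    rw [hadj, M.w_induced]
    omega
  · -- x_induced
    intro i j
    rw [hadj, M.x_induced]
    omega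
  · -- cover
    rintro ⟨v, hv⟩
    rcases hv with ⟨i, hi, rfl⟩ | ⟨j, hj, rfl⟩
    · left
      exact ⟨i - k₀, Subtype.ext (congrArg M.w (by simp only [Set.mem_setOf_eq] at hi; omega))⟩
    · right
      exact ⟨j - l₀, Subtype.ext (congrArg M.x (by simp only [Set.mem_setOf_eq] at hj; omega))⟩
  · -- locFin
    intro v
    have hsub : ((L.induce s).neighborSet v) ⊆ Subtype.val ⁻¹' (L.neighborSet ↑v) :=
      fun u hu => hu
    exact ((M.locFin ↑v).preimage Subtype.val_injective.injOn).subset hsub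
  · -- init
    exact hr₀
  · -- sameEnd
    have hadj2 : ∀ n, (L.induce s).Adj (w' (c n)) (x' (d n)) := fun n => hcd n
    refine ⟨c, d, fun n => SimpleGraph.Walk.cons (hadj2 n) SimpleGraph.Walk.nil, ?_, ?_⟩
    · intro n
      rw [SimpleGraph.Walk.isPath_def]
      simp only [SimpleGraph.Walk.support_cons, SimpleGraph.Walk.support_nil,
        List.nodup_cons, List.mem_singleton, List.nodup_nil, and_true, List.not_mem_nil,
        not_false_eq_true]
      exact fun h => M.disj _ _ (congrArg Subtype.val h)
    · intro m n hmn v hvm hvn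
      simp only [SimpleGraph.Walk.support_cons, SimpleGraph.Walk.support_nil,
        List.mem_cons, List.mem_singleton, List.not_mem_nil, or_false] at hvm hvn
      rcases hvm with rfl | rfl <;> rcases hvn with h | h
      · have := M.w_inj (congrArg Subtype.val h)
        exact hmn (hc.injective (by omega))
      · exact M.disj _ _ (congrArg Subtype.val h)
      · exact M.disj _ _ (congrArg Subtype.val h.symm)
      · have := M.x_inj (congrArg Subtype.val h)
        exact hmn (hd.injective (by omega))
  · -- cross-free
    rintro i1 j1 i2 j2 ⟨h1, h2, h3, h4⟩
    have hcr : M.Cross (k₀ + i1) (l₀ + j1) (k₀ + i2) (l₀ + j2) :=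
      ⟨h1, h2, by omega, by omega⟩
    rcases hN _ _ _ _ hcr with h | h <;> omega

end MLAux

/-- Every infinite messy ladder either has an infinite maximal sequence of
pairwise independent full crosses, or contains an infinite cross-free ladder
(a messy ladder none of whose rungs cross) as an induced subgraph. -/
theorem maximal_cross_seq_or_cross_free (L : SimpleGraph V) (M : MessyLadder L) :
    (∃ I1 J1 I2 J2 : ℕ → ℕ, MaximalCrossSeq M I1 J1 I2 J2) ∨
    (∃ s : Set V, ∃ M' : MessyLadder (L.induce s),
        ∀ i1 j1 i2 j2, ¬ M'.Cross i1 j1 i2 j2) := by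
  classical
  by_cases H : ∀ N, ∃ i1 j1 i2 j2, M.Cross i1 j1 i2 j2 ∧ N ≤ i1 ∧ N ≤ j2
  · exact Or.inl (MLAux.main_left M H)
  · push_neg at H
    obtain ⟨N, hN⟩ := H
    refine Or.inr (MLAux.main_right M N ?_)
    intro i1 j1 i2 j2 hc
    rcases Nat.lt_or_ge i1 N with h | h
    · exact Or.inl h
    · exact Or.inr (hN i1 j1 i2 j2 hc h)
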